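/- Let a,b,c,d > 0 with a+b+c+d = 1. Then the Pearson correlation ρ = (ad−bc)/√((a+b)(c+d)(a+c)(b+d)) can be rewritten as ρ = √( (a/(a+b))·(d/(c+d))·(a/(a+c))·(d/(b+d)) ) − √( (b/(a+b))·(c/(c+d))·(c/(a+c))·(b/(b+d)) ). -/

import Mathlib

theorem stmt_18 (a b c d : ℝ) (ha : 0 < a) (hb : 0 < b) (hc : 0 < c) (hd : 0 < d)
    (hsum : a + b + c + d = 1) :
    (a * d - b * c) / Real.sqrt ((a + b) * (c + d) * (a + c) * (b + d)) =
      Real.sqrt ((a / (a + b)) * (d / (c + d)) * (a / (a + c)) * (d / (b + d))) -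
      Real.sqrt ((b / (a + b)) * (c / (c + d)) * (c / (a + c)) * (b / (b + d))) := by
  set D : ℝ := (a + b) * (c + d) * (a + c) * (b + d) with hD
  have hDpos : 0 < D := by positivity
  have h1 : (a / (a + b)) * (d / (c + d)) * (a / (a + c)) * (d / (b + d)) = (a * d)^2 / D := by
    rw [hD]; field_simp
  have h2 : (b / (a + b)) * (c / (c + d)) * (c / (a + c)) * (b / (b + d)) = (b * c)^2 / D := by
    rw [hD]; field_simp
  rw [h1, h2, Real.sqrt_div' _ hDpos.le, Real.sqrt_div' _ hDpos.le] <;>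
    try exact (by positivity : (0:ℝ) ≤ _)
  rw [Real.sqrt_sq (by positivity : (0:ℝ) ≤ a * d), Real.sqrt_sq (by positivity : (0:ℝ) ≤ b * c)]
  rw [div_sub_div_same]
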